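/- arXiv:2412.09316 — 5 statements merged into one kernel-verified Lean document; each statement's English description precedes it below -/
import Mathlib

section
/- Let D ⊂ ℝ^d be compact and convex, ν a probability measure on D absolutely continuous with respect to Lebesgue measure, Φ ∈ C(D) with maximum value Φ̄ on D, and η > 0. Suppose (X,g) is a tuple of n pairwise distinct sites and weights such that m_i[X,g] ≥ m_i*/2 for positive constants m_1*,…,m_n*, and F_n^η(X,g) ≥ c for some c ∈ ℝ. Then for all i ≠ j: dist(x_i, D) ≤ √(2(Φ̄ − c)/(η m_i*)) and |x_i − x_j| ≥ √(η m_i* m_j* / (4(Φ̄ − c))). -/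
open MeasureTheory Set Filter Topology
open scoped ENNReal NNReal

noncomputable section

/-- Euclidean space `ℝ^d`. -/
abbrev Euc (d : ℕ) : Type := EuclideanSpace ℝ (Fin d)

/-- `ρ ⪯ μ` in the convex order: `∫ ψ dρ ≤ ∫ ψ dμ` for every convex function `ψ` for which
both integrals exist. -/
def ConvexOrderLE {d : ℕ} (ρ μ : Measure (Euc d)) : Prop :=
  ∀ ψ : Euc d → ℝ, ConvexOn ℝ Set.univ ψ → Integrable ψ μ → Integrable ψ ρ →
    ∫ x, ψ x ∂ρ ≤ ∫ x, ψ x ∂μ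

/-- The set of fusions of `ν`: probability measures supported on `D` that are dominated by `ν`
in the convex order. -/
def fusions {d : ℕ} (D : Set (Euc d)) (ν : Measure (Euc d)) : Set (Measure (Euc d)) :=
  {ρ | IsProbabilityMeasure ρ ∧ ρ Dᶜ = 0 ∧ ConvexOrderLE ρ ν}

/-- The (topological) support of a measure. -/
def msupport {d : ℕ} (ρ : Measure (Euc d)) : Set (Euc d) := {x | ∀ U ∈ nhds x, ρ U ≠ 0}

/-- Laguerre cell of site `x_i` with weight `g_i` inside the domain `D`. -/
def LaguerreCell {d n : ℕ} (D : Set (Euc d)) (X : Fin n → Euc d) (g : Fin n → ℝ)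
    (i : Fin n) : Set (Euc d) :=
  {y ∈ D | ∀ j, ‖y - X i‖ ^ 2 - g i ≤ ‖y - X j‖ ^ 2 - g j}

/-- ν-mass of the `i`-th Laguerre cell. -/
def cellMass {d n : ℕ} (D : Set (Euc d)) (ν : Measure (Euc d)) (X : Fin n → Euc d)
    (g : Fin n → ℝ) (i : Fin n) : ℝ :=
  (ν (LaguerreCell D X g i)).toReal

/-- ν-barycenter of the `i`-th Laguerre cell. -/
def cellBary {d n : ℕ} (D : Set (Euc d)) (ν : Measure (Euc d)) (X : Fin n → Euc d)
    (g : Fin n → ℝ) (i : Fin n) : Euc d :=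
  (cellMass D ν X g i)⁻¹ • ∫ y in LaguerreCell D X g i, y ∂ν

/-- The objective `F_n[X,g] = Σ_{i : m_i > 0} m_i[X,g] Φ(b_i[X,g])`. -/
def Fn {d n : ℕ} (D : Set (Euc d)) (ν : Measure (Euc d)) (Φ : Euc d → ℝ)
    (X : Fin n → Euc d) (g : Fin n → ℝ) : ℝ :=
  ∑ i, if 0 < cellMass D ν X g i then cellMass D ν X g i * Φ (cellBary D ν X g i) else 0

/-- The penalty term `R_n[X,g]`. -/
def Rn {d n : ℕ} (D : Set (Euc d)) (ν : Measure (Euc d))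
    (X : Fin n → Euc d) (g : Fin n → ℝ) : ℝ :=
  (∑ i, if 0 < cellMass D ν X g i then
      ∫ y in LaguerreCell D X g i, ‖y - X i‖ ^ 2 ∂ν else 0)
  + ∑ i, ∑ j, if i ≠ j ∧ 0 < cellMass D ν X g i ∧ 0 < cellMass D ν X g j then
      cellMass D ν X g i * cellMass D ν X g j / ‖X i - X j‖ ^ 2 else 0

/-- The penalized objective `F_n^η = F_n - η R_n`. -/
def Fη {d n : ℕ} (D : Set (Euc d)) (ν : Measure (Euc d)) (Φ : Euc d → ℝ) (η : ℝ)
    (X : Fin n → Euc d) (g : Fin n → ℝ) : ℝ :=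
  Fn D ν Φ X g - η * Rn D ν X g

/-- a priori bounds along maximizing sequences: if the cell masses satisfy
`m_i[X,g] ≥ m_i*/2` with `m_i* > 0` and `F_n^η(X,g) ≥ c`, then for `i ≠ j` the site `x_i`
stays within distance `√(2(Φ̄−c)/(η m_i*))` of `D` and `|x_i−x_j| ≥ √(η m_i* m_j*/(4(Φ̄−c)))`,
where `Φ̄` is the maximum of `Φ` on `D`. -/
theorem a_priori_bounds
    {d : ℕ} (D : Set (Euc d)) (hD : IsCompact D) (hDconv : Convex ℝ D)
    (ν : Measure (Euc d)) [IsProbabilityMeasure ν] (hνD : ν Dᶜ = 0)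
    (hac : ν ≪ (volume : Measure (Euc d)))
    (Φ : Euc d → ℝ) (hΦ : ContinuousOn Φ D)
    (Φbar : ℝ) (hΦbar : IsGreatest (Φ '' D) Φbar)
    (η : ℝ) (hη : 0 < η)
    {n : ℕ} (X : Fin n → Euc d) (g : Fin n → ℝ) (hX : Function.Injective X)
    (mstar : Fin n → ℝ) (hmstar : ∀ i, 0 < mstar i)
    (hmass : ∀ i, mstar i / 2 ≤ cellMass D ν X g i)
    (c : ℝ) (hc : c ≤ Fη D ν Φ η X g) :
    (∀ i, Metric.infDist (X i) D ≤ Real.sqrt (2 * (Φbar - c) / (η * mstar i))) ∧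
    (∀ i j, i ≠ j →
      Real.sqrt (η * mstar i * mstar j / (4 * (Φbar - c))) ≤ dist (X i) (X j)) := by
  classical
  set S : Fin n → Set (Euc d) := LaguerreCell D X g with hS
  have hScl : ∀ i, IsClosed (S i) := by
    intro i
    have hSeq : S i = D ∩ ⋂ j, {y : Euc d | ‖y - X i‖ ^ 2 - g i ≤ ‖y - X j‖ ^ 2 - g j} := by
      ext y; simp [hS, LaguerreCell, Set.mem_iInter]
    rw [hSeq]
    exact hD.isClosed.inter (isClosed_iInter fun j => isClosed_le
      (((continuous_id.sub continuous_const).norm.pow 2).sub continuous_const)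
      (((continuous_id.sub continuous_const).norm.pow 2).sub continuous_const))
  have hSsub : ∀ i, S i ⊆ D := fun i => Set.sep_subset _ _
  have hScomp : ∀ i, IsCompact (S i) := fun i => hD.of_isClosed_subset (hScl i) (hSsub i)
  have hSm : ∀ i, MeasurableSet (S i) := fun i => (hScl i).measurableSet
  have hmass_eq : ∀ i, cellMass D ν X g i = (ν (S i)).toReal := fun i => rfl
  have hmpos : ∀ i, 0 < cellMass D ν X g i :=
    fun i => lt_of_lt_of_le (half_pos (hmstar i)) (hmass i)
  have hνfin : ∀ i, ν (S i) ≠ ⊤ := fun i => measure_ne_top ν _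
  have hν0 : ∀ i, ν (S i) ≠ 0 := by
    intro i h
    have h2 := hmpos i
    rw [hmass_eq i, h] at h2
    simp at h2
  -- pairwise a.e. disjointness of Laguerre cells
  have hdisj : ∀ i j, i ≠ j → ν (S i ∩ S j) = 0 := by
    intro i j hij
    set v : Euc d := X j - X i with hv
    have hv0 : v ≠ 0 := sub_ne_zero.mpr (fun h => hij (hX h.symm))
    set r : ℝ := (‖X j‖ ^ 2 - ‖X i‖ ^ 2 + g i - g j) / 2 with hr
    set f : Euc d →ᵃ[ℝ] ℝ := ((innerSL ℝ v).toLinearMap).toAffineMap with hf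
    set A : AffineSubspace ℝ (Euc d) :=
      AffineSubspace.comap f (AffineSubspace.mk' r (⊥ : Submodule ℝ ℝ)) with hA
    have hmemA : ∀ y : Euc d, y ∈ A ↔ (inner ℝ v y : ℝ) = r := by
      intro y
      constructor
      · intro hy
        have h1 : f y ∈ AffineSubspace.mk' r (⊥ : Submodule ℝ ℝ) := hy
        rw [AffineSubspace.mem_mk', Submodule.mem_bot, vsub_eq_sub,
          sub_eq_zero] at h1
        exact h1
      · intro hy
        show f y ∈ AffineSubspace.mk' r (⊥ : Submodule ℝ ℝ)
        rw [AffineSubspace.mem_mk', Submodule.mem_bot, vsub_eq_sub,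
          sub_eq_zero]
        exact hy
    have hsub : S i ∩ S j ⊆ (A : Set (Euc d)) := by
      rintro y ⟨⟨-, h1⟩, ⟨-, h2⟩⟩
      have e1 := h1 j
      have e2 := h2 i
      have exp1 : ‖y - X i‖ ^ 2 = ‖y‖ ^ 2 - 2 * inner ℝ y (X i) + ‖X i‖ ^ 2 :=
        norm_sub_sq_real y (X i)
      have exp2 : ‖y - X j‖ ^ 2 = ‖y‖ ^ 2 - 2 * inner ℝ y (X j) + ‖X j‖ ^ 2 :=
        norm_sub_sq_real y (X j)
      rw [SetLike.mem_coe, hmemA]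
      have hv1 : (inner ℝ v y : ℝ) = inner ℝ (X j) y - inner ℝ (X i) y := by
        rw [hv, inner_sub_left]
      have hsymm1 : (inner ℝ (X j) y : ℝ) = inner ℝ y (X j) := real_inner_comm _ _
      have hsymm2 : (inner ℝ (X i) y : ℝ) = inner ℝ y (X i) := real_inner_comm _ _
      rw [hv1, hsymm1, hsymm2, hr]
      linarith
    have hne : A ≠ ⊤ := by
      intro htop
      have hy : ((r + 1) / ‖v‖ ^ 2) • v ∈ A := by
        rw [htop]; exact AffineSubspace.mem_top ℝ _ _
      rw [hmemA] at hy
      rw [inner_smul_right, real_inner_self_eq_norm_sq] at hy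
      have hvnorm : (0:ℝ) < ‖v‖ ^ 2 := pow_pos (norm_pos_iff.mpr hv0) 2
      rw [div_mul_cancel₀ _ (ne_of_gt hvnorm)] at hy
      linarith
    exact measure_mono_null hsub (hac (Measure.addHaar_affineSubspace _ A hne))
  -- the cells cover `D`
  have hsum1 : ∀ _i₀ : Fin n, ∑ k, cellMass D ν X g k = 1 := by
    intro i₀
    have hcover : D ⊆ ⋃ k ∈ Finset.univ, S k := by
      intro y hy
      obtain ⟨k, -, hk⟩ := Finset.exists_min_image Finset.univ
        (fun j => ‖y - X j‖ ^ 2 - g j) ⟨i₀, Finset.mem_univ _⟩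
      exact Set.mem_biUnion (Finset.mem_univ k) ⟨hy, fun j => hk j (Finset.mem_univ j)⟩
    have hDmeas : MeasurableSet D := hD.isClosed.measurableSet
    have hD1 : ν D = 1 := by
      have h := measure_add_measure_compl (μ := ν) hDmeas
      rw [hνD, add_zero, measure_univ] at h
      exact h
    have hU : ν (⋃ k ∈ Finset.univ, S k) = ∑ k, ν (S k) :=
      measure_biUnion_finset₀ (fun a _ b _ hab => hdisj a b hab)
        (fun b _ => (hSm b).nullMeasurableSet)
    have h1 : ν (⋃ k ∈ Finset.univ, S k) = 1 := by
      refine le_antisymm (le_trans (measure_mono (Set.subset_univ _)) (by simp)) ?_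
      calc (1:ℝ≥0∞) = ν D := hD1.symm
        _ ≤ _ := measure_mono hcover
    have h2 : ∑ k, ν (S k) = 1 := by rw [← hU, h1]
    calc ∑ k, cellMass D ν X g k = (∑ k, ν (S k)).toReal := by
          rw [ENNReal.toReal_sum (fun k _ => hνfin k)]
          exact Finset.sum_congr rfl fun k _ => hmass_eq k
      _ = 1 := by rw [h2]; simp
  -- barycenters lie in D
  have hbary : ∀ k, cellBary D ν X g k ∈ D := by
    intro k
    have heq : cellBary D ν X g k = ⨍ y in S k, y ∂ν := by
      rw [setAverage_eq]
      rfl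
    rw [heq]
    refine hDconv.set_average_mem hD.isClosed (hν0 k) (hνfin k) ?_ ?_
    · exact Filter.Eventually.mono (ae_restrict_mem (hSm k)) (fun y hy => hSsub k hy)
    · exact continuousOn_id.integrableOn_compact (hScomp k)
  -- Fn is bounded by Φbar
  have hFn : ∀ _i₀ : Fin n, Fn D ν Φ X g ≤ Φbar := by
    intro i₀
    have heq : Fn D ν Φ X g = ∑ k, cellMass D ν X g k * Φ (cellBary D ν X g k) :=
      Finset.sum_congr rfl fun k _ => if_pos (hmpos k)
    rw [heq]
    calc ∑ k, cellMass D ν X g k * Φ (cellBary D ν X g k)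
        ≤ ∑ k, cellMass D ν X g k * Φbar :=
          Finset.sum_le_sum fun k _ => mul_le_mul_of_nonneg_left
            (hΦbar.2 (Set.mem_image_of_mem Φ (hbary k))) (le_of_lt (hmpos k))
      _ = Φbar := by rw [← Finset.sum_mul, hsum1 i₀, one_mul]
  have hc' : c ≤ Fn D ν Φ X g - η * Rn D ν X g := hc
  have key : ∀ _i₀ : Fin n, η * Rn D ν X g ≤ Φbar - c := by
    intro i₀; linarith [hFn i₀]
  -- nonnegativity of the individual terms of Rn
  have hintnn : ∀ k, 0 ≤ ∫ y in S k, ‖y - X k‖ ^ 2 ∂ν :=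
    fun k => setIntegral_nonneg (hSm k) (fun y _ => by positivity)
  have hterm1nn : ∀ k : Fin n,
      0 ≤ if 0 < cellMass D ν X g k then ∫ y in LaguerreCell D X g k, ‖y - X k‖ ^ 2 ∂ν else 0 := by
    intro k
    split_ifs with h
    · exact hintnn k
    · exact le_rfl
  have hterm2nn : ∀ a b : Fin n,
      0 ≤ if a ≠ b ∧ 0 < cellMass D ν X g a ∧ 0 < cellMass D ν X g b then
        cellMass D ν X g a * cellMass D ν X g b / ‖X a - X b‖ ^ 2 else 0 := by
    intro a b
    split_ifs with h
    · have := hmpos a; have := hmpos b; positivity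
    · exact le_rfl
  have hsum2nn : 0 ≤ ∑ a, ∑ b, if a ≠ b ∧ 0 < cellMass D ν X g a ∧ 0 < cellMass D ν X g b then
        cellMass D ν X g a * cellMass D ν X g b / ‖X a - X b‖ ^ 2 else 0 :=
    Finset.sum_nonneg fun a _ => Finset.sum_nonneg fun b _ => hterm2nn a b
  have hsum1nn : 0 ≤ ∑ k, if 0 < cellMass D ν X g k then
        ∫ y in LaguerreCell D X g k, ‖y - X k‖ ^ 2 ∂ν else 0 :=
    Finset.sum_nonneg fun k _ => hterm1nn k
  -- lower bound Rn by a single integral term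
  have hRge1 : ∀ k, (∫ y in S k, ‖y - X k‖ ^ 2 ∂ν) ≤ Rn D ν X g := by
    intro k
    have h1 := Finset.single_le_sum (f := fun k' : Fin n => if 0 < cellMass D ν X g k' then
        ∫ y in LaguerreCell D X g k', ‖y - X k'‖ ^ 2 ∂ν else 0)
      (fun k' _ => hterm1nn k') (Finset.mem_univ k)
    simp only [if_pos (hmpos k)] at h1
    unfold Rn
    have : (∫ y in LaguerreCell D X g k, ‖y - X k‖ ^ 2 ∂ν) = ∫ y in S k, ‖y - X k‖ ^ 2 ∂ν := rfl
    linarith [hsum2nn]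
  -- lower bound Rn by a single pair term
  have hRge2 : ∀ i j, i ≠ j →
      cellMass D ν X g i * cellMass D ν X g j / ‖X i - X j‖ ^ 2 ≤ Rn D ν X g := by
    intro i j hij
    have hinner := Finset.single_le_sum (f := fun b : Fin n =>
        if i ≠ b ∧ 0 < cellMass D ν X g i ∧ 0 < cellMass D ν X g b then
          cellMass D ν X g i * cellMass D ν X g b / ‖X i - X b‖ ^ 2 else 0)
      (fun b _ => hterm2nn i b) (Finset.mem_univ j)
    have hcond : (i ≠ j ∧ 0 < cellMass D ν X g i ∧ 0 < cellMass D ν X g j) :=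
      ⟨hij, hmpos i, hmpos j⟩
    simp only [if_pos hcond] at hinner
    have houter := Finset.single_le_sum (f := fun a : Fin n => ∑ b : Fin n,
        if a ≠ b ∧ 0 < cellMass D ν X g a ∧ 0 < cellMass D ν X g b then
          cellMass D ν X g a * cellMass D ν X g b / ‖X a - X b‖ ^ 2 else 0)
      (fun a _ => Finset.sum_nonneg fun b _ => hterm2nn a b) (Finset.mem_univ i)
    unfold Rn
    linarith [hsum1nn]
  constructor
  · -- distance to D bound
    intro i
    have hkey := key i
    have hInt : (Metric.infDist (X i) D) ^ 2 * cellMass D ν X g i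
        ≤ ∫ y in S i, ‖y - X i‖ ^ 2 ∂ν := by
      have hc1 : ∫ y in S i, (Metric.infDist (X i) D) ^ 2 ∂ν ≤ ∫ y in S i, ‖y - X i‖ ^ 2 ∂ν := by
        refine setIntegral_mono_on
          ((integrableOn_const_iff).mpr (Or.inr (lt_of_le_of_ne le_top (hνfin i))))
          ((((continuous_id.sub continuous_const).norm.pow 2).continuousOn).integrableOn_compact
            (hScomp i))
          (hSm i) ?_
        intro y hy
        have h1 : Metric.infDist (X i) D ≤ dist (X i) y :=
          Metric.infDist_le_dist_of_mem (hSsub i hy)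
        have h2 : dist (X i) y = ‖y - X i‖ := by rw [dist_eq_norm, norm_sub_rev]
        calc Metric.infDist (X i) D ^ 2 ≤ dist (X i) y ^ 2 :=
              pow_le_pow_left₀ Metric.infDist_nonneg h1 2
          _ = ‖y - X i‖ ^ 2 := by rw [h2]
      rwa [setIntegral_const, smul_eq_mul, mul_comm] at hc1
    have hm := hmass i
    have hms := hmstar i
    have hmp := hmpos i
    have h2 : Metric.infDist (X i) D ^ 2 ≤ 2 * (Φbar - c) / (η * mstar i) := by
      rw [le_div_iff₀ (by positivity)]
      have hA1 : η * ((Metric.infDist (X i) D) ^ 2 * cellMass D ν X g i)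
          ≤ η * ∫ y in S i, ‖y - X i‖ ^ 2 ∂ν := mul_le_mul_of_nonneg_left hInt hη.le
      have hA2 : η * (∫ y in S i, ‖y - X i‖ ^ 2 ∂ν) ≤ η * Rn D ν X g :=
        mul_le_mul_of_nonneg_left (hRge1 i) hη.le
      nlinarith [sq_nonneg (Metric.infDist (X i) D),
        mul_le_mul_of_nonneg_left hm (mul_nonneg hη.le (sq_nonneg (Metric.infDist (X i) D)))]
    exact Real.le_sqrt_of_sq_le h2
  · -- pairwise separation bound
    intro i j hij
    have hkey := key i
    have hvne : X i - X j ≠ 0 := sub_ne_zero.mpr (fun h => hij (hX h))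
    have hQ : (0:ℝ) < ‖X i - X j‖ ^ 2 := pow_pos (norm_pos_iff.mpr hvne) 2
    have hterm := hRge2 i j hij
    have h1 : η * (cellMass D ν X g i * cellMass D ν X g j / ‖X i - X j‖ ^ 2) ≤ Φbar - c :=
      le_trans (mul_le_mul_of_nonneg_left hterm hη.le) hkey
    have hpos : 0 < Φbar - c :=
      lt_of_lt_of_le (mul_pos hη (div_pos (mul_pos (hmpos i) (hmpos j)) hQ)) h1
    have hmm : η * (cellMass D ν X g i * cellMass D ν X g j)
        ≤ (Φbar - c) * ‖X i - X j‖ ^ 2 := by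
      calc η * (cellMass D ν X g i * cellMass D ν X g j)
          = η * (cellMass D ν X g i * cellMass D ν X g j / ‖X i - X j‖ ^ 2) * ‖X i - X j‖ ^ 2 := by
            field_simp
        _ ≤ (Φbar - c) * ‖X i - X j‖ ^ 2 := mul_le_mul_of_nonneg_right h1 hQ.le
    have hmi := hmass i
    have hmj := hmass j
    have hprod : mstar i * mstar j ≤ 4 * (cellMass D ν X g i * cellMass D ν X g j) := by
      nlinarith [hmstar i, hmstar j, hmpos i, hmpos j]
    have h2 : η * mstar i * mstar j / (4 * (Φbar - c)) ≤ ‖X i - X j‖ ^ 2 := by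
      rw [div_le_iff₀ (by positivity)]
      nlinarith [mul_le_mul_of_nonneg_left hprod hη.le]
    calc Real.sqrt (η * mstar i * mstar j / (4 * (Φbar - c)))
        ≤ Real.sqrt (‖X i - X j‖ ^ 2) := Real.sqrt_le_sqrt h2
      _ = ‖X i - X j‖ := Real.sqrt_sq (norm_nonneg _)
      _ = dist (X i) (X j) := (dist_eq_norm _ _).symm
end
end

section
/- Let D ⊂ ℝ^d be compact and convex, ν a probability measure on D absolutely continuous with respect to Lebesgue measure, and X = (x_1,…,x_n) pairwise distinct sites. For the semi-discrete dual Kantorovich functional D[g] = ∫_D g^C(y) dν(y) + m·g, where g^C(y) = min_{1≤i≤n}(|y−x_i|² − g_i) and m ∈ ℝ^n is fixed, the partial derivative with respect to the weight g_j satisfies ∂_{g_j} D[g] = m_j − ∫_D χ_{L_j[X,g]}(y) dν(y) = m_j − ν(L_j[X,g]). -/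
open MeasureTheory Set Filter Topology
open scoped ENNReal NNReal

noncomputable section

/-- The semi-discrete dual Kantorovich functional
`D[g] = ∫_D g^C(y) dν(y) + m·g` with `g^C(y) = min_i (|y−x_i|² − g_i)`. -/
def dualKantorovich {d n : ℕ} (D : Set (Euc d)) (ν : Measure (Euc d)) (X : Fin n → Euc d)
    (m : Fin n → ℝ) (g : Fin n → ℝ) : ℝ :=
  (∫ y in D, ⨅ i, (‖y - X i‖ ^ 2 - g i) ∂ν) + ∑ i, m i * g i

/-- A "bisector-type" set `{y | ‖y-a‖² - ‖y-b‖² = r}` with `a ≠ b` has Lebesgue measure zero. -/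
lemma volume_bisector_null {d : ℕ} {a b : Euc d} (hab : a ≠ b) (r : ℝ) :
    (volume : Measure (Euc d)) {y | ‖y - a‖ ^ 2 - ‖y - b‖ ^ 2 = r} = 0 := by
  set v : Euc d := b - a with hv
  have hv0 : v ≠ 0 := sub_ne_zero.mpr (Ne.symm hab)
  -- rewrite the set as an inner-product level set
  have hset : {y : Euc d | ‖y - a‖ ^ 2 - ‖y - b‖ ^ 2 = r}
      = {y : Euc d | inner ℝ v y = (r - ‖a‖ ^ 2 + ‖b‖ ^ 2) / 2} := by
    ext y
    simp only [mem_setOf_eq]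
    have h1 : ‖y - a‖ ^ 2 - ‖y - b‖ ^ 2 = 2 * inner ℝ v y + ‖a‖ ^ 2 - ‖b‖ ^ 2 := by
      have ha' : ‖y - a‖ ^ 2 = ‖y‖ ^ 2 - 2 * inner ℝ a y + ‖a‖ ^ 2 := by
        rw [← real_inner_self_eq_norm_sq, ← real_inner_self_eq_norm_sq,
          ← real_inner_self_eq_norm_sq]
        simp [inner_sub_sub_self, real_inner_comm a y]
        rw [norm_sub_sq_real, real_inner_comm a y]
      have hb' : ‖y - b‖ ^ 2 = ‖y‖ ^ 2 - 2 * inner ℝ b y + ‖b‖ ^ 2 := by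
        rw [← real_inner_self_eq_norm_sq, ← real_inner_self_eq_norm_sq,
          ← real_inner_self_eq_norm_sq]
        simp [inner_sub_sub_self, real_inner_comm b y]
        rw [norm_sub_sq_real, real_inner_comm b y]
      rw [ha', hb', hv, inner_sub_left]
      ring
    rw [h1]
    constructor <;> intro h <;> linarith
  rw [hset]
  -- this is a translate of the kernel of `innerSL ℝ v`
  set f : Euc d →L[ℝ] ℝ := innerSL ℝ v with hf
  have hker : LinearMap.ker (f : Euc d →ₗ[ℝ] ℝ) ≠ ⊤ := by
    intro h
    have : v ∈ LinearMap.ker (f : Euc d →ₗ[ℝ] ℝ) := h ▸ Submodule.mem_top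
    have : inner ℝ v v = (0 : ℝ) := this
    rw [real_inner_self_eq_norm_sq] at this
    have hn : ‖v‖ ^ 2 = 0 := this
    exact hv0 (by simpa using sq_eq_zero_iff.mp hn)
  set c : ℝ := (r - ‖a‖ ^ 2 + ‖b‖ ^ 2) / 2
  set y₀ : Euc d := (c / ‖v‖ ^ 2) • v with hy₀
  have hvy₀ : inner ℝ v y₀ = c := by
    rw [hy₀, real_inner_smul_right, real_inner_self_eq_norm_sq]
    field_simp [sq_eq_zero_iff, norm_eq_zero, hv0]
  have hpre : {y : Euc d | inner ℝ v y = c}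
      = (fun y => y + (-y₀)) ⁻¹' (LinearMap.ker (f : Euc d →ₗ[ℝ] ℝ) : Set (Euc d)) := by
    ext y
    simp only [mem_preimage, SetLike.mem_coe, LinearMap.mem_ker, mem_setOf_eq]
    have : (f : Euc d →ₗ[ℝ] ℝ) (y + -y₀) = inner ℝ v y - c := by
      simp [hf, inner_add_right, inner_neg_right, hvy₀]
      ring
    rw [this]
    constructor <;> intro h <;> linarith
  rw [hpre, measure_preimage_add_right]
  exact Measure.addHaar_submodule volume _ hker

/-- the partial derivative of the dual Kantorovich functional with respect to
the weight `g_j` is `m_j − ν(L_j[X,g])`. -/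
theorem dualKantorovich_hasDerivAt
    {d : ℕ} (D : Set (Euc d)) (hD : IsCompact D) (hDconv : Convex ℝ D)
    (ν : Measure (Euc d)) [IsProbabilityMeasure ν] (hνD : ν Dᶜ = 0)
    (hac : ν ≪ (volume : Measure (Euc d)))
    {n : ℕ} (hn : 0 < n) (X : Fin n → Euc d) (hX : Function.Injective X)
    (m : Fin n → ℝ) (g : Fin n → ℝ) (j : Fin n) :
    HasDerivAt (fun t => dualKantorovich D ν X m (Function.update g j t))
      (m j - (ν (LaguerreCell D X g j)).toReal) (g j) := by
  haveI : Nonempty (Fin n) := ⟨⟨0, hn⟩⟩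
  set F : ℝ → Euc d → ℝ :=
    fun t y => ⨅ i, (‖y - X i‖ ^ 2 - Function.update g j t i) with hF
  have hbdd : ∀ (y : Euc d) (a : Fin n → ℝ),
      BddBelow (range fun i => ‖y - X i‖ ^ 2 - a i) := fun y a =>
    (Set.finite_range _).bddBelow
  -- the "strict" Laguerre cell (without the domain constraint)
  set S : Set (Euc d) :=
    {y | ∀ i, i ≠ j → ‖y - X j‖ ^ 2 - g j < ‖y - X i‖ ^ 2 - g i} with hS
  -- the null "boundary" set
  set Z : Set (Euc d) :=
    {y | ∃ i, i ≠ j ∧ ‖y - X j‖ ^ 2 - g j = ‖y - X i‖ ^ 2 - g i} with hZ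
  set F' : Euc d → ℝ := S.indicator fun _ => (-1 : ℝ) with hF'
  have hSopen : IsOpen S := by
    have : S = ⋂ i, {y : Euc d | i ≠ j → ‖y - X j‖ ^ 2 - g j < ‖y - X i‖ ^ 2 - g i} := by
      ext y; simp [hS, Set.mem_iInter]
    rw [this]
    refine isOpen_iInter_of_finite fun i => ?_
    by_cases hij : i = j
    · simp [hij]
    · have : {y : Euc d | i ≠ j → ‖y - X j‖ ^ 2 - g j < ‖y - X i‖ ^ 2 - g i}
          = {y : Euc d | ‖y - X j‖ ^ 2 - g j < ‖y - X i‖ ^ 2 - g i} := by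
        ext y; simp [hij]
      rw [this]
      exact isOpen_lt (by continuity) (by continuity)
  have hZnull : ν Z = 0 := by
    have h1 : Z ⊆ ⋃ i, {y : Euc d |
        i ≠ j ∧ ‖y - X j‖ ^ 2 - g j = ‖y - X i‖ ^ 2 - g i} := by
      intro y hy
      obtain ⟨i, hi⟩ := hy
      exact Set.mem_iUnion.mpr ⟨i, hi⟩
    refine measure_mono_null h1 (measure_iUnion_null fun i => ?_)
    by_cases hij : i = j
    · simp [hij]
    · refine hac ?_
      refine measure_mono_null (fun y hy => ?_)
        (volume_bisector_null (a := X j) (b := X i) (fun h => hij (hX h).symm)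
          (g j - g i))
      obtain ⟨-, hy2⟩ := hy
      simp only [mem_setOf_eq]
      linarith
  -- pointwise derivative outside Z
  have hdiff : ∀ y ∉ Z, HasDerivAt (fun t => F t y) (F' y) (g j) := by
    intro y hy
    by_cases hyS : y ∈ S
    · have h1 : F' y = -1 := by simp [hF', indicator_of_mem hyS]
      rw [h1]
      have hev : (fun t => F t y) =ᶠ[𝓝 (g j)] fun t => ‖y - X j‖ ^ 2 - t := by
        have h2 : ∀ᶠ t in 𝓝 (g j), ∀ i, i ≠ j → ‖y - X j‖ ^ 2 - t ≤ ‖y - X i‖ ^ 2 - g i := by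
          rw [eventually_all]
          intro i
          by_cases hij : i = j
          · filter_upwards with t ht; exact absurd hij ht
          · have hgt : ‖y - X j‖ ^ 2 - (‖y - X i‖ ^ 2 - g i) < g j := by
              have := hyS i hij; linarith
            filter_upwards [eventually_gt_nhds hgt] with t ht _
            linarith
        filter_upwards [h2] with t ht
        refine le_antisymm ?_ (le_ciInf fun i => ?_)
        · simpa using ciInf_le (hbdd y (Function.update g j t)) j
        · by_cases hij : i = j
          · subst hij; simp
          · simpa [Function.update_of_ne hij] using ht i hij
      exact ((hasDerivAt_id (g j)).const_sub (‖y - X j‖ ^ 2)).congr_of_eventuallyEq hev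
    · have h1 : F' y = 0 := by simp [hF', indicator_of_notMem hyS]
      rw [h1]
      have h2 : ∃ i, i ≠ j ∧ ‖y - X i‖ ^ 2 - g i ≤ ‖y - X j‖ ^ 2 - g j := by
        by_contra hcon
        push_neg at hcon
        exact hyS fun i hij => hcon i hij
      obtain ⟨i₀, hi₀j, hle⟩ := h2
      have hlt : ‖y - X i₀‖ ^ 2 - g i₀ < ‖y - X j‖ ^ 2 - g j := by
        rcases lt_or_eq_of_le hle with h | h
        · exact h
        · exact absurd ⟨i₀, hi₀j, h.symm⟩ hy
      set I : ℝ := ⨅ i, (‖y - X i‖ ^ 2 - g i) with hI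
      have hIle : ∀ i, I ≤ ‖y - X i‖ ^ 2 - g i := fun i => ciInf_le (hbdd y _) i
      have hev : (fun t => F t y) =ᶠ[𝓝 (g j)] fun _ => I := by
        have hgt : g j < ‖y - X j‖ ^ 2 - (‖y - X i₀‖ ^ 2 - g i₀) := by linarith
        filter_upwards [eventually_lt_nhds hgt] with t ht
        have htj : ‖y - X i₀‖ ^ 2 - g i₀ < ‖y - X j‖ ^ 2 - t := by linarith
        refine le_antisymm ?_ (le_ciInf fun i => ?_)
        · obtain ⟨i', hi'⟩ := exists_eq_ciInf_of_finite
            (f := fun i => ‖y - X i‖ ^ 2 - g i)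
          have hi'j : i' ≠ j := fun hij => by
            have h5 : I = ‖y - X j‖ ^ 2 - g j := by rw [hI, ← hi', hij]
            linarith [hIle i₀]
          calc F t y ≤ ‖y - X i'‖ ^ 2 - Function.update g j t i' := ciInf_le (hbdd y _) i'
            _ = I := by rw [Function.update_of_ne hi'j, hi']
        · by_cases hij : i = j
          · subst hij
            simp only [Function.update_self]
            linarith [hIle i₀]
          · rw [Function.update_of_ne hij]
            exact hIle i
      exact (hasDerivAt_const (g j) I).congr_of_eventuallyEq hev
  -- global Lipschitz bound in t
  have hlip : ∀ y : Euc d, LipschitzWith 1 fun t => F t y := by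
    have key : ∀ (t s : ℝ) (y : Euc d), F t y - F s y ≤ |t - s| := by
      intro t s y
      obtain ⟨i, hi⟩ := exists_eq_ciInf_of_finite
        (f := fun i => ‖y - X i‖ ^ 2 - Function.update g j s i)
      have h1 : F t y ≤ ‖y - X i‖ ^ 2 - Function.update g j t i := ciInf_le (hbdd y _) i
      have h2 : ‖y - X i‖ ^ 2 - Function.update g j t i
          ≤ (‖y - X i‖ ^ 2 - Function.update g j s i) + |t - s| := by
        by_cases hij : i = j
        · subst hij
          simp only [Function.update_self]
          have := neg_abs_le (t - s)
          linarith
        · simp [Function.update_of_ne hij, abs_nonneg]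
      have h3 : F s y = ‖y - X i‖ ^ 2 - Function.update g j s i := hi.symm
      linarith
    intro y
    refine LipschitzWith.of_dist_le_mul fun t s => ?_
    rw [Real.dist_eq, Real.dist_eq, NNReal.coe_one, one_mul, abs_sub_le_iff]
    constructor
    · exact key t s y
    · simpa [abs_sub_comm] using key s t y
  -- continuity in y
  have hcont : ∀ t, Continuous (F t) := by
    intro t
    have heq : F t = fun y => Finset.univ.inf' Finset.univ_nonempty
        (fun i => ‖y - X i‖ ^ 2 - Function.update g j t i) := by
      funext y
      rw [Finset.inf'_univ_eq_ciInf]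
    rw [heq]
    exact Continuous.finset_inf'_apply Finset.univ_nonempty fun i _ =>
      ((continuous_id.sub continuous_const).norm.pow 2).sub continuous_const
  -- derivative of the integral part
  have hint : HasDerivAt (fun t => ∫ y in D, F t y ∂ν)
      (-(ν (S ∩ D)).toReal) (g j) := by
    have hZae : ∀ᵐ y ∂ν.restrict D, y ∉ Z := by
      rw [ae_iff]
      simp only [not_not]
      exact le_antisymm ((Measure.restrict_apply_le D Z).trans hZnull.le) (zero_le)
    have key := hasDerivAt_integral_of_dominated_loc_of_lip
      (μ := ν.restrict D) (F := F) (F' := F') (x₀ := g j)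
      (bound := fun _ => (1 : ℝ)) (s := Metric.ball (g j) 1) (Metric.ball_mem_nhds _ one_pos)
      (Eventually.of_forall fun t => (hcont t).aestronglyMeasurable)
      ((hcont (g j)).continuousOn.integrableOn_compact hD)
      ((measurable_const.indicator hSopen.measurableSet).aestronglyMeasurable)
      (Eventually.of_forall fun y => by
        simpa using (hlip y).lipschitzOnWith (s := Metric.ball (g j) 1))
      (integrable_const 1)
      (hZae.mono fun y hy => hdiff y hy)
    have hval : ∫ y, F' y ∂ν.restrict D = -(ν (S ∩ D)).toReal := by
      rw [hF', integral_indicator_const _ hSopen.measurableSet,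
        measureReal_restrict_apply hSopen.measurableSet]
      simp [Measure.real]
    rw [← hval]
    exact key.2
  -- the two cell measures agree
  have hcell : ν (S ∩ D) = ν (LaguerreCell D X g j) := by
    refine le_antisymm (measure_mono fun y hy => ?_) ?_
    · obtain ⟨hyS, hyD⟩ := hy
      refine ⟨hyD, fun i => ?_⟩
      by_cases hij : i = j
      · subst hij; exact le_refl _
      · exact (hyS i hij).le
    · have hsub : LaguerreCell D X g j ⊆ (S ∩ D) ∪ Z := by
        intro y hy
        obtain ⟨hyD, hyL⟩ := hy
        by_cases hyS : y ∈ S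
        · exact Or.inl ⟨hyS, hyD⟩
        · have : ∃ i, i ≠ j ∧ ¬(‖y - X j‖ ^ 2 - g j < ‖y - X i‖ ^ 2 - g i) := by
            by_contra hcon
            push_neg at hcon
            exact hyS fun i hij => hcon i hij
          obtain ⟨i, hij, hnlt⟩ := this
          exact Or.inr ⟨i, hij, le_antisymm (hyL i) (not_lt.mp hnlt)⟩
      calc ν (LaguerreCell D X g j) ≤ ν ((S ∩ D) ∪ Z) := measure_mono hsub
        _ ≤ ν (S ∩ D) + ν Z := measure_union_le _ _
        _ = ν (S ∩ D) := by rw [hZnull, add_zero]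
  -- derivative of the linear part
  have hsum : HasDerivAt (fun t => ∑ i, m i * Function.update g j t i) (m j) (g j) := by
    have h1 : ∀ i : Fin n, HasDerivAt (fun t => m i * Function.update g j t i)
        (if i = j then m j else 0) (g j) := by
      intro i
      by_cases hij : i = j
      · rw [if_pos hij]
        have heq : (fun t => m i * Function.update g j t i) = fun t => m i * t := by
          funext t
          rw [hij, Function.update_self]
        rw [heq, hij]
        simpa using (hasDerivAt_id (g j)).const_mul (m j)
      · simp only [Function.update_of_ne hij, if_neg hij]
        exact hasDerivAt_const _ _
    have h2 := HasDerivAt.fun_sum (fun i (_ : i ∈ Finset.univ) => h1 i)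
    simpa using h2
  have htotal := hint.fun_add hsum
  rw [hcell] at htotal
  have heq : (fun t => (∫ y in D, F t y ∂ν) + ∑ i, m i * Function.update g j t i)
      = fun t => dualKantorovich D ν X m (Function.update g j t) := rfl
  rw [heq] at htotal
  rw [sub_eq_neg_add]
  exact htotal


end
end

section
/- Let D ⊂ ℝ^d be compact and convex and ν a probability measure on D absolutely continuous with respect to Lebesgue measure. Fix pairwise distinct sites X = (x_1,…,x_n) and weights g ∈ ℝ^n. Then for each ε > 0 the functions χ_i^ε[X,g], i = 1,…,n, form a partition of unity on D, and as ε → 0, χ_i^ε[X,g] converges to the indicator function χ_{L_i[X,g]} of the Laguerre cell in L¹(ν) for every i. -/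
open MeasureTheory Set Filter Topology
open scoped ENNReal NNReal
open scoped RealInnerProductSpace

noncomputable section

/-- Entropy-regularized cell function
`χ_i^ε[X,g](y) = exp((g_i − |y−x_i|²)/ε) / Σ_j exp((g_j − |y−x_j|²)/ε)`. -/
def chiEps {d n : ℕ} (X : Fin n → Euc d) (g : Fin n → ℝ) (ε : ℝ) (i : Fin n)
    (y : Euc d) : ℝ :=
  Real.exp ((g i - ‖y - X i‖ ^ 2) / ε) / ∑ j, Real.exp ((g j - ‖y - X j‖ ^ 2) / ε)

/-- Regularized mass `m_i^ε[X,g] = ∫ χ_i^ε[X,g] dν`. -/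
def mEps {d n : ℕ} (ν : Measure (Euc d)) (X : Fin n → Euc d) (g : Fin n → ℝ) (ε : ℝ)
    (i : Fin n) : ℝ :=
  ∫ y, chiEps X g ε i y ∂ν

/-- Regularized barycenter `b_i^ε[X,g] = (m_i^ε)⁻¹ ∫ y χ_i^ε[X,g](y) dν(y)`. -/
def bEps {d n : ℕ} (ν : Measure (Euc d)) (X : Fin n → Euc d) (g : Fin n → ℝ) (ε : ℝ)
    (i : Fin n) : Euc d :=
  (mEps ν X g ε i)⁻¹ • ∫ y, chiEps X g ε i y • y ∂ν

lemma exp_div_tendsto {c : ℝ} (hc : c < 0) :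
    Tendsto (fun ε : ℝ => Real.exp (c / ε)) (𝓝[>] (0:ℝ)) (𝓝 0) := by
  have h1 : Tendsto (fun ε : ℝ => c / ε) (𝓝[>] (0:ℝ)) atBot := by
    simpa [div_eq_mul_inv] using
      (tendsto_const_mul_atBot_of_neg hc).2 (tendsto_inv_nhdsGT_zero (𝕜 := ℝ))
  exact Real.tendsto_exp_atBot.comp h1

lemma chi_tendsto_one {n : ℕ} (f : Fin n → ℝ) (i : Fin n) (h : ∀ j, j ≠ i → f j < f i) :
    Tendsto (fun ε : ℝ => Real.exp (f i / ε) / ∑ j, Real.exp (f j / ε))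
      (𝓝[>] (0:ℝ)) (𝓝 1) := by
  have key : ∀ ε ∈ Ioi (0:ℝ),
      (∑ j, Real.exp ((f j - f i) / ε))⁻¹
        = Real.exp (f i / ε) / ∑ j, Real.exp (f j / ε) := by
    intro ε hε
    have hε' : (ε:ℝ) ≠ 0 := ne_of_gt hε
    have : ∀ j, Real.exp (f j / ε) = Real.exp (f i / ε) * Real.exp ((f j - f i) / ε) := by
      intro j
      rw [← Real.exp_add]
      congr 1
      field_simp
      ring
    rw [Finset.sum_congr rfl (fun j _ => this j), ← Finset.mul_sum,
      div_mul_eq_div_div, div_self (Real.exp_ne_zero _), one_div]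
  have hsum : Tendsto (fun ε : ℝ => ∑ j, Real.exp ((f j - f i) / ε)) (𝓝[>] (0:ℝ))
      (𝓝 (∑ j : Fin n, if j = i then 1 else 0)) := by
    refine tendsto_finset_sum _ (fun j _ => ?_)
    by_cases hj : j = i
    · subst hj; simp
    · simpa [hj] using exp_div_tendsto (sub_neg.mpr (h j hj))
  have hs1 : (∑ j : Fin n, if j = i then (1:ℝ) else 0) = 1 := by simp
  rw [hs1] at hsum
  have := hsum.inv₀ one_ne_zero
  rw [inv_one] at this
  exact this.congr' (eventually_nhdsWithin_of_forall key)

lemma chi_tendsto_zero {n : ℕ} (f : Fin n → ℝ) (i j : Fin n) (h : f i < f j) :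
    Tendsto (fun ε : ℝ => Real.exp (f i / ε) / ∑ k, Real.exp (f k / ε))
      (𝓝[>] (0:ℝ)) (𝓝 0) := by
  have hub : ∀ ε : ℝ, Real.exp (f i / ε) / ∑ k, Real.exp (f k / ε)
      ≤ Real.exp ((f i - f j) / ε) := by
    intro ε
    have hj : Real.exp (f j / ε) ≤ ∑ k, Real.exp (f k / ε) :=
      Finset.single_le_sum (f := fun k => Real.exp (f k / ε))
        (fun k _ => (Real.exp_pos _).le) (Finset.mem_univ j)
    calc Real.exp (f i / ε) / ∑ k, Real.exp (f k / ε)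
        ≤ Real.exp (f i / ε) / Real.exp (f j / ε) :=
          div_le_div_of_nonneg_left (Real.exp_pos _).le (Real.exp_pos _) hj
      _ = Real.exp ((f i - f j) / ε) := by rw [← Real.exp_sub, sub_div]
  refine squeeze_zero (fun ε => div_nonneg (Real.exp_pos _).le
      (Finset.sum_nonneg fun k _ => (Real.exp_pos _).le)) hub ?_
  exact exp_div_tendsto (sub_neg.mpr h)

lemma hyperplane_null {d : ℕ} (v : EuclideanSpace ℝ (Fin d)) (hv : v ≠ 0) (c : ℝ) :
    volume {y : EuclideanSpace ℝ (Fin d) | ⟪v, y⟫ = c} = 0 := by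
  set x₀ : EuclideanSpace ℝ (Fin d) := (c / ‖v‖ ^ 2) • v with hx₀def
  have hx₀ : ⟪v, x₀⟫ = c := by
    rw [hx₀def, real_inner_smul_right, real_inner_self_eq_norm_sq]
    field_simp [sq_eq_zero_iff, norm_eq_zero, hv]
  set K : Submodule ℝ (EuclideanSpace ℝ (Fin d)) :=
    LinearMap.ker (innerSL ℝ v : EuclideanSpace ℝ (Fin d) →ₗ[ℝ] ℝ) with hKdef
  have hset : {y : EuclideanSpace ℝ (Fin d) | ⟪v, y⟫ = c}
      = (fun y => y + (-x₀)) ⁻¹' (K : Set (EuclideanSpace ℝ (Fin d))) := by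
    ext y
    simp only [mem_setOf_eq, mem_preimage, SetLike.mem_coe, hKdef, LinearMap.mem_ker,
      ContinuousLinearMap.coe_coe, innerSL_apply_apply]
    rw [← sub_eq_add_neg, inner_sub_right, hx₀, sub_eq_zero]
  rw [hset, measure_preimage_add_right]
  refine Measure.addHaar_submodule _ _ ?_
  intro hK
  have : ⟪v, v⟫ = 0 := by
    have : v ∈ K := hK ▸ Submodule.mem_top
    simpa [hKdef] using this
  exact hv (inner_self_eq_zero.mp this)

lemma bisector_null {d : ℕ} {a b : EuclideanSpace ℝ (Fin d)} (hab : a ≠ b) (ga gb : ℝ) :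
    volume {y : EuclideanSpace ℝ (Fin d) | ‖y - a‖ ^ 2 - ga = ‖y - b‖ ^ 2 - gb} = 0 := by
  have hv : (2:ℝ) • (b - a) ≠ 0 := smul_ne_zero two_ne_zero (sub_ne_zero.mpr hab.symm)
  have key := hyperplane_null _ hv ((‖b‖ ^ 2 - gb) - (‖a‖ ^ 2 - ga))
  convert key using 2
  ext y
  simp only [mem_setOf_eq]
  have e1 : ⟪(2:ℝ) • (b - a), y⟫ = 2 * (⟪y, b⟫ - ⟪y, a⟫) := by
    rw [real_inner_smul_left, inner_sub_left, real_inner_comm b y, real_inner_comm a y]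
  rw [norm_sub_sq_real y a, norm_sub_sq_real y b, e1]
  constructor <;> intro h <;> linarith


/-- for each `ε > 0` the entropy-regularized cell functions form a partition
of unity on `D`, and as `ε → 0` they converge in `L¹(ν)` to the Laguerre-cell indicators. -/
theorem chiEps_partition_and_L1_convergence
    {d : ℕ} (D : Set (Euc d)) (hD : IsCompact D) (hDconv : Convex ℝ D)
    (ν : Measure (Euc d)) [IsProbabilityMeasure ν] (hνD : ν Dᶜ = 0)
    (hac : ν ≪ (volume : Measure (Euc d)))
    {n : ℕ} (hn : 0 < n) (X : Fin n → Euc d) (hX : Function.Injective X) (g : Fin n → ℝ) :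
    (∀ ε : ℝ, 0 < ε → ∀ y ∈ D, ∑ i, chiEps X g ε i y = 1) ∧
    (∀ i, Tendsto
      (fun ε => ∫ y, |chiEps X g ε i y - (LaguerreCell D X g i).indicator (1 : Euc d → ℝ) y| ∂ν)
      (𝓝[>] (0 : ℝ)) (𝓝 0)) := by
  haveI : Nonempty (Fin n) := ⟨⟨0, hn⟩⟩
  have hSpos : ∀ (ε : ℝ) (y : Euc d), 0 < ∑ j, Real.exp ((g j - ‖y - X j‖ ^ 2) / ε) :=
    fun ε y => Finset.sum_pos (fun j _ => Real.exp_pos _) Finset.univ_nonempty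
  constructor
  · intro ε hε y hy
    simp only [chiEps, ← Finset.sum_div]
    exact div_self (hSpos ε y).ne'
  · intro i
    have hmeas_cell : MeasurableSet (LaguerreCell D X g i) := by
      have hclosed : IsClosed (LaguerreCell D X g i) := by
        have heq : LaguerreCell D X g i
            = D ∩ ⋂ j, {y : Euc d | ‖y - X i‖ ^ 2 - g i ≤ ‖y - X j‖ ^ 2 - g j} := by
          ext y; simp [LaguerreCell, Set.mem_iInter]
        rw [heq]
        exact hD.isClosed.inter (isClosed_iInter fun j => isClosed_le
          (((continuous_id.sub continuous_const).norm.pow 2).sub continuous_const)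
          (((continuous_id.sub continuous_const).norm.pow 2).sub continuous_const))
      exact hclosed.measurableSet
    have hchicont : ∀ ε : ℝ, Continuous (chiEps X g ε i) := by
      intro ε
      unfold chiEps
      refine Continuous.div ?_ ?_ (fun y => (hSpos ε y).ne')
      · exact Real.continuous_exp.comp ((continuous_const.sub
          ((continuous_id.sub continuous_const).norm.pow 2)).div_const ε)
      · exact continuous_finset_sum _ fun j _ => Real.continuous_exp.comp
          ((continuous_const.sub ((continuous_id.sub continuous_const).norm.pow 2)).div_const ε)
    have hchi01 : ∀ (ε : ℝ) (y : Euc d), 0 ≤ chiEps X g ε i y ∧ chiEps X g ε i y ≤ 1 := by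
      intro ε y
      refine ⟨div_nonneg (Real.exp_pos _).le (hSpos ε y).le, ?_⟩
      rw [chiEps, div_le_one (hSpos ε y)]
      exact Finset.single_le_sum (f := fun j => Real.exp ((g j - ‖y - X j‖ ^ 2) / ε))
        (fun k _ => (Real.exp_pos _).le) (Finset.mem_univ i)
    have hind01 : ∀ y : Euc d, 0 ≤ (LaguerreCell D X g i).indicator (1 : Euc d → ℝ) y ∧
        (LaguerreCell D X g i).indicator (1 : Euc d → ℝ) y ≤ 1 := by
      intro y
      by_cases hy : y ∈ LaguerreCell D X g i <;>
        simp [Set.indicator_apply, hy]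
    -- a.e. pointwise convergence
    have hD' : ∀ᵐ y ∂ν, y ∈ D := by
      rw [ae_iff]
      exact hνD
    have h0 : volume (⋃ j : Fin n, ⋃ k : Fin n,
        {y : Euc d | j ≠ k ∧ ‖y - X j‖ ^ 2 - g j = ‖y - X k‖ ^ 2 - g k}) = 0 := by
      refine measure_iUnion_null fun j => measure_iUnion_null fun k => ?_
      by_cases hjk : j = k
      · subst hjk; simp
      · exact measure_mono_null (fun y hy => hy.2)
          (bisector_null (fun h => hjk (hX h)) (g j) (g k))
    have hN : ∀ᵐ y ∂ν, ∀ j k : Fin n, j ≠ k →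
        ‖y - X j‖ ^ 2 - g j ≠ ‖y - X k‖ ^ 2 - g k := by
      rw [ae_iff]
      refine measure_mono_null (fun y hy => ?_) (hac h0)
      simp only [mem_setOf_eq, not_forall, not_not, exists_prop] at hy
      obtain ⟨j, k, hjk, heq⟩ := hy
      exact Set.mem_iUnion.mpr ⟨j, Set.mem_iUnion.mpr ⟨k, ⟨hjk, heq⟩⟩⟩
    have hae : ∀ᵐ y ∂ν, Tendsto (fun ε => chiEps X g ε i y) (𝓝[>] (0:ℝ))
        (𝓝 ((LaguerreCell D X g i).indicator (1 : Euc d → ℝ) y)) := by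
      filter_upwards [hD', hN] with y hyD hyN
      set f : Fin n → ℝ := fun j => g j - ‖y - X j‖ ^ 2 with hf
      by_cases hcell : y ∈ LaguerreCell D X g i
      · rw [Set.indicator_of_mem hcell]
        simp only [Pi.one_apply]
        have hstrict : ∀ j, j ≠ i → f j < f i := by
          intro j hj
          have hle : ‖y - X i‖ ^ 2 - g i ≤ ‖y - X j‖ ^ 2 - g j := hcell.2 j
          have hne : ‖y - X i‖ ^ 2 - g i ≠ ‖y - X j‖ ^ 2 - g j := hyN i j (Ne.symm hj)
          have := lt_of_le_of_ne hle hne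
          simp only [hf]
          linarith
        exact chi_tendsto_one f i hstrict
      · rw [Set.indicator_of_notMem hcell]
        obtain ⟨j, hj⟩ : ∃ j, ‖y - X j‖ ^ 2 - g j < ‖y - X i‖ ^ 2 - g i := by
          by_contra hcon
          push_neg at hcon
          exact hcell ⟨hyD, hcon⟩
        have hfij : f i < f j := by simp only [hf]; linarith
        exact chi_tendsto_zero f i j hfij
    have key := tendsto_integral_filter_of_dominated_convergence (μ := ν) (l := 𝓝[>] (0:ℝ))
      (F := fun ε y => |chiEps X g ε i y - (LaguerreCell D X g i).indicator (1 : Euc d → ℝ) y|)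
      (f := fun _ : Euc d => (0:ℝ)) (bound := fun _ : Euc d => (1:ℝ))
      (Eventually.of_forall fun ε =>
        (((hchicont ε).measurable.sub
          (measurable_const.indicator hmeas_cell)).abs).aestronglyMeasurable)
      (Eventually.of_forall fun ε => Eventually.of_forall fun y => by
        have h1 := hchi01 ε y
        have h2 := hind01 y
        have hb : |chiEps X g ε i y - (LaguerreCell D X g i).indicator (1 : Euc d → ℝ) y| ≤ 1 :=
          abs_le.mpr ⟨by linarith [h1.1, h2.2], by linarith [h1.2, h2.1]⟩
        simpa [Real.norm_eq_abs, abs_abs] using hb)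
      (integrable_const 1)
      (hae.mono fun y hy => by
        have h2 : Tendsto
            (fun ε => chiEps X g ε i y - (LaguerreCell D X g i).indicator (1 : Euc d → ℝ) y)
            (𝓝[>] (0:ℝ)) (𝓝 ((LaguerreCell D X g i).indicator (1 : Euc d → ℝ) y
              - (LaguerreCell D X g i).indicator (1 : Euc d → ℝ) y)) :=
          hy.sub tendsto_const_nhds
        rw [sub_self] at h2
        simpa using h2.abs)
    simpa using key
end
end

section
/- Let D ⊂ ℝ^d be compact and convex and ν a probability measure on D absolutely continuous with respect to Lebesgue measure. Fix pairwise distinct sites X = (x_1,…,x_n) and weights g ∈ ℝ^n, and define the regularized masses m_i^ε[X,g] = ∫_D χ_i^ε[X,g] dν and, when m_i^ε > 0, the regularized barycenters b_i^ε[X,g] = (m_i^ε[X,g])^{-1} ∫_D y χ_i^ε[X,g](y) dν(y). Then as ε → 0, m_i^ε[X,g] → m_i[X,g] for every i, and b_i^ε[X,g] → b_i[X,g] for every i with m_i[X,g] > 0. -/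
open MeasureTheory Set Filter Topology
open scoped ENNReal NNReal

noncomputable section

/-- A hyperplane has Lebesgue measure zero. -/
lemma hyperplane_volume_zero {d : ℕ} {v : Euc d} (hv : v ≠ 0) (r : ℝ) :
    (volume : Measure (Euc d)) {y | (inner ℝ v y : ℝ) = r} = 0 := by
  have hvv : (inner ℝ v v : ℝ) ≠ 0 := inner_self_ne_zero.mpr hv
  set p : Euc d := ((r / (inner ℝ v v : ℝ)) • v : Euc d) with hp
  have hip : (inner ℝ v p : ℝ) = r := by
    rw [hp, real_inner_smul_right, div_mul_cancel₀ _ hvv]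
  have hset : {y : Euc d | (inner ℝ v y : ℝ) = r}
      = (AffineSubspace.mk' p ((ℝ ∙ v)ᗮ) : Set (Euc d)) := by
    ext y
    rw [Set.mem_setOf_eq, SetLike.mem_coe, AffineSubspace.mem_mk',
      Submodule.mem_orthogonal_singleton_iff_inner_right]
    have : y -ᵥ p = y - p := rfl
    rw [this, inner_sub_right, hip, sub_eq_zero]
  rw [hset]
  refine Measure.addHaar_affineSubspace _ _ ?_
  intro htop
  have hdir := AffineSubspace.direction_mk' p ((ℝ ∙ v)ᗮ)
  rw [htop, AffineSubspace.direction_top] at hdir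
  have hvmem : v ∈ (ℝ ∙ v)ᗮ := by rw [← hdir]; trivial
  rw [Submodule.mem_orthogonal_singleton_iff_inner_right] at hvmem
  exact hvv hvmem

/-- `exp(c/ε) → 0` as `ε → 0⁺` for `c < 0`. -/
lemma tendsto_exp_div_neg {c : ℝ} (hc : c < 0) :
    Tendsto (fun ε : ℝ => Real.exp (c / ε)) (𝓝[>] (0 : ℝ)) (𝓝 0) := by
  have h1 : Tendsto (fun ε : ℝ => c / ε) (𝓝[>] (0 : ℝ)) atBot := by
    simpa [div_eq_mul_inv] using (tendsto_inv_nhdsGT_zero).const_mul_atTop_of_neg hc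
  exact Real.tendsto_exp_atBot.comp h1

/-- Pointwise convergence of `χ_i^ε` at a point where the values `g_j − ‖y−x_j‖²` are
pairwise distinct. -/
lemma chi_tendsto {d n : ℕ} (X : Fin n → Euc d) (g : Fin n → ℝ) (i : Fin n)
    (y : Euc d) (hdist : ∀ j, j ≠ i → g j - ‖y - X j‖ ^ 2 ≠ g i - ‖y - X i‖ ^ 2) :
    Tendsto (fun ε => chiEps X g ε i y) (𝓝[>] (0 : ℝ))
      (𝓝 (if ∀ j, ‖y - X i‖ ^ 2 - g i ≤ ‖y - X j‖ ^ 2 - g j then 1 else 0)) := by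
  set a : Fin n → ℝ := fun j => g j - ‖y - X j‖ ^ 2 with ha
  by_cases hcell : ∀ j, ‖y - X i‖ ^ 2 - g i ≤ ‖y - X j‖ ^ 2 - g j
  · -- each a j ≤ a i, strictly for j ≠ i
    rw [if_pos hcell]
    have hlt : ∀ j, j ≠ i → a j < a i := by
      intro j hj
      have h1 : a j ≤ a i := by have := hcell j; simp only [ha]; linarith
      exact lt_of_le_of_ne h1 (hdist j hj)
    have hrw : ∀ ε : ℝ, chiEps X g ε i y = (∑ j, Real.exp ((a j - a i) / ε))⁻¹ := by
      intro ε
      have hsum : Real.exp (a i / ε) * (∑ j, Real.exp ((a j - a i) / ε))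
          = ∑ j, Real.exp (a j / ε) := by
        rw [Finset.mul_sum]
        refine Finset.sum_congr rfl fun j _ => ?_
        rw [← Real.exp_add, ← add_div, add_sub_cancel]
      have hbase : chiEps X g ε i y
          = Real.exp (a i / ε) / ∑ j, Real.exp (a j / ε) := rfl
      rw [hbase, ← hsum, div_mul_cancel_left₀ (Real.exp_ne_zero _)]
    simp only [hrw]
    have hsum_lim : Tendsto (fun ε : ℝ => ∑ j, Real.exp ((a j - a i) / ε)) (𝓝[>] (0 : ℝ))
        (𝓝 (∑ j : Fin n, if j = i then 1 else 0)) := by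
      refine tendsto_finset_sum _ fun j _ => ?_
      by_cases hj : j = i
      · subst hj
        simp only [if_pos rfl, sub_self, zero_div, Real.exp_zero]
        exact tendsto_const_nhds
      · rw [if_neg hj]
        exact tendsto_exp_div_neg (by linarith [hlt j hj])
    have hsum1 : (∑ j : Fin n, if j = i then (1 : ℝ) else 0) = 1 := by
      simp [Finset.sum_ite_eq]
    rw [hsum1] at hsum_lim
    simpa using hsum_lim.inv₀ one_ne_zero
  · rw [if_neg hcell]
    push_neg at hcell
    obtain ⟨k, hk⟩ := hcell
    have hik : a i < a k := by simp only [ha]; linarith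
    refine squeeze_zero (fun ε => ?_) (fun ε => ?_) (tendsto_exp_div_neg (c := a i - a k) (by linarith))
    · exact div_nonneg (Real.exp_pos _).le (Finset.sum_nonneg fun j _ => (Real.exp_pos _).le)
    · have h1 : Real.exp (a k / ε) ≤ ∑ j, Real.exp (a j / ε) :=
        Finset.single_le_sum (f := fun j => Real.exp (a j / ε))
          (fun j _ => (Real.exp_pos _).le) (Finset.mem_univ k)
      have h2 : chiEps X g ε i y ≤ Real.exp (a i / ε) / Real.exp (a k / ε) := by
        simp only [chiEps, ← ha]
        exact div_le_div_of_nonneg_left (Real.exp_pos _).le (Real.exp_pos _) h1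
      calc chiEps X g ε i y ≤ Real.exp (a i / ε) / Real.exp (a k / ε) := h2
        _ = Real.exp ((a i - a k) / ε) := by rw [← Real.exp_sub, div_sub_div_same]

/-- as `ε → 0`, the regularized masses `m_i^ε[X,g]` converge to the cell
masses `m_i[X,g]`, and the regularized barycenters `b_i^ε[X,g]` converge to the cell
barycenters `b_i[X,g]` whenever `m_i[X,g] > 0`. -/
theorem mEps_bEps_convergence
    {d : ℕ} (D : Set (Euc d)) (hD : IsCompact D) (hDconv : Convex ℝ D)
    (ν : Measure (Euc d)) [IsProbabilityMeasure ν] (hνD : ν Dᶜ = 0)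
    (hac : ν ≪ (volume : Measure (Euc d)))
    {n : ℕ} (hn : 0 < n) (X : Fin n → Euc d) (hX : Function.Injective X) (g : Fin n → ℝ) :
    (∀ i, Tendsto (fun ε => mEps ν X g ε i) (𝓝[>] (0 : ℝ)) (𝓝 (cellMass D ν X g i))) ∧
    (∀ i, 0 < cellMass D ν X g i →
      Tendsto (fun ε => bEps ν X g ε i) (𝓝[>] (0 : ℝ)) (𝓝 (cellBary D ν X g i))) := by
  have : Nonempty (Fin n) := ⟨⟨0, hn⟩⟩
  -- a.e. y is in D
  have hDae : ∀ᵐ y ∂ν, y ∈ D := by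
    rw [ae_iff]
    exact hνD
  -- pairwise distinct values a.e.
  have hpair : ∀ j k : Fin n, j ≠ k →
      ν {y : Euc d | g j - ‖y - X j‖ ^ 2 = g k - ‖y - X k‖ ^ 2} = 0 := by
    intro j k hjk
    have hv : X k - X j ≠ 0 := sub_ne_zero.mpr fun h => hjk (hX h).symm
    set r : ℝ := (‖X k‖ ^ 2 - ‖X j‖ ^ 2 - g k + g j) / 2 with hr
    have hset : {y : Euc d | g j - ‖y - X j‖ ^ 2 = g k - ‖y - X k‖ ^ 2}
        = {y : Euc d | (inner ℝ (X k - X j) y : ℝ) = r} := by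
      ext y
      simp only [Set.mem_setOf_eq]
      rw [norm_sub_sq_real y (X j), norm_sub_sq_real y (X k), inner_sub_left, hr]
      constructor <;> intro h <;>
        linarith [real_inner_comm y (X j), real_inner_comm y (X k)]
    rw [hset]
    exact hac (hyperplane_volume_zero hv r)
  have hsep : ∀ᵐ y ∂ν, ∀ j k : Fin n, j ≠ k →
      g j - ‖y - X j‖ ^ 2 ≠ g k - ‖y - X k‖ ^ 2 := by
    rw [ae_all_iff]
    intro j
    rw [ae_all_iff]
    intro k
    by_cases hjk : j = k
    · exact Eventually.of_forall fun y h => absurd hjk h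
    · rw [ae_iff]
      refine measure_mono_null (fun y hy => ?_) (hpair j k hjk)
      simp only [Set.mem_setOf_eq] at hy ⊢
      push_neg at hy
      exact hy.2
  -- measurability of Laguerre cells
  have hLclosed : ∀ i, IsClosed (LaguerreCell D X g i) := by
    intro i
    have hLeq : LaguerreCell D X g i
        = D ∩ ⋂ j, {y : Euc d | ‖y - X i‖ ^ 2 - g i ≤ ‖y - X j‖ ^ 2 - g j} := by
      ext y; simp [LaguerreCell]
    rw [hLeq]
    refine hD.isClosed.inter (isClosed_iInter fun j => isClosed_le ?_ ?_) <;>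
      exact ((continuous_id.sub continuous_const).norm.pow 2).sub continuous_const
  have hLmeas : ∀ i, MeasurableSet (LaguerreCell D X g i) :=
    fun i => (hLclosed i).measurableSet
  -- continuity / measurability of χ
  have hchi_cont : ∀ (ε : ℝ) (i : Fin n), Continuous (chiEps X g ε i) := by
    intro ε i
    refine Continuous.div ?_ ?_ ?_
    · exact (Real.continuous_exp.comp ((continuous_const.sub
        (((continuous_id.sub continuous_const).norm.pow 2))).div_const ε))
    · exact continuous_finset_sum _ fun j _ => Real.continuous_exp.comp
        ((continuous_const.sub (((continuous_id.sub continuous_const).norm.pow 2))).div_const ε)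
    · intro y
      exact ne_of_gt (Finset.sum_pos (fun j _ => Real.exp_pos _) Finset.univ_nonempty)
  have hchi_nonneg : ∀ (ε : ℝ) (i : Fin n) (y : Euc d), 0 ≤ chiEps X g ε i y := by
    intro ε i y
    exact div_nonneg (Real.exp_pos _).le (Finset.sum_nonneg fun j _ => (Real.exp_pos _).le)
  have hchi_le_one : ∀ (ε : ℝ) (i : Fin n) (y : Euc d), chiEps X g ε i y ≤ 1 := by
    intro ε i y
    rw [chiEps, div_le_one (Finset.sum_pos (fun j _ => Real.exp_pos _) Finset.univ_nonempty)]
    exact Finset.single_le_sum (f := fun j => Real.exp ((g j - ‖y - X j‖ ^ 2) / ε))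
      (fun j _ => (Real.exp_pos _).le) (Finset.mem_univ i)
  -- pointwise a.e. limit with the indicator
  have hlim : ∀ i, ∀ᵐ y ∂ν, Tendsto (fun ε => chiEps X g ε i y) (𝓝[>] (0 : ℝ))
      (𝓝 ((LaguerreCell D X g i).indicator (fun _ => (1 : ℝ)) y)) := by
    intro i
    filter_upwards [hDae, hsep] with y hyD hysep
    have h1 := chi_tendsto X g i y (fun j hj => hysep j i hj)
    have h2 : (LaguerreCell D X g i).indicator (fun _ => (1 : ℝ)) y
        = if ∀ j, ‖y - X i‖ ^ 2 - g i ≤ ‖y - X j‖ ^ 2 - g j then 1 else 0 := by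
      by_cases hc : ∀ j, ‖y - X i‖ ^ 2 - g i ≤ ‖y - X j‖ ^ 2 - g j
      · have hmem : y ∈ LaguerreCell D X g i := by
          simp only [LaguerreCell, Set.mem_setOf_eq]
          exact ⟨hyD, hc⟩
        rw [if_pos hc, Set.indicator_of_mem hmem]
      · rw [if_neg hc, Set.indicator_of_notMem (fun hmem => hc hmem.2)]
    rw [h2]
    exact h1
  -- mass convergence
  have hmass : ∀ i, Tendsto (fun ε => mEps ν X g ε i) (𝓝[>] (0 : ℝ))
      (𝓝 (cellMass D ν X g i)) := by
    intro i
    have key : Tendsto (fun ε => mEps ν X g ε i) (𝓝[>] (0 : ℝ))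
        (𝓝 (∫ y, (LaguerreCell D X g i).indicator (fun _ => (1 : ℝ)) y ∂ν)) := by
      refine tendsto_integral_filter_of_dominated_convergence (fun _ => (1 : ℝ))
        (Eventually.of_forall fun ε => ((hchi_cont ε i).aestronglyMeasurable))
        (Eventually.of_forall fun ε => Eventually.of_forall fun y => ?_)
        (integrable_const 1) (hlim i)
      rw [Real.norm_eq_abs, abs_of_nonneg (hchi_nonneg ε i y)]
      exact hchi_le_one ε i y
    have : (∫ y, (LaguerreCell D X g i).indicator (fun _ => (1 : ℝ)) y ∂ν)
        = cellMass D ν X g i := by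
      rw [cellMass]
      exact integral_indicator_one (hLmeas i)
    rwa [this] at key
  refine ⟨hmass, fun i hm => ?_⟩
  -- barycenter convergence
  obtain ⟨R, hR⟩ := hD.isBounded.exists_norm_le
  have hint : Tendsto (fun ε => ∫ y, chiEps X g ε i y • y ∂ν) (𝓝[>] (0 : ℝ))
      (𝓝 (∫ y in LaguerreCell D X g i, y ∂ν)) := by
    have key : Tendsto (fun ε => ∫ y, chiEps X g ε i y • y ∂ν) (𝓝[>] (0 : ℝ))
        (𝓝 (∫ y, (LaguerreCell D X g i).indicator (fun y => y) y ∂ν)) := by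
      refine tendsto_integral_filter_of_dominated_convergence (fun _ => |R|)
        (Eventually.of_forall fun ε => ((hchi_cont ε i).smul continuous_id).aestronglyMeasurable)
        (Eventually.of_forall fun ε => ?_) (integrable_const _) ?_
      · filter_upwards [hDae] with y hyD
        rw [norm_smul, Real.norm_eq_abs, abs_of_nonneg (hchi_nonneg ε i y)]
        calc chiEps X g ε i y * ‖y‖ ≤ 1 * ‖y‖ := by
              have := norm_nonneg y
              nlinarith [hchi_le_one ε i y, hchi_nonneg ε i y]
          _ = ‖y‖ := one_mul _
          _ ≤ R := hR y hyD
          _ ≤ |R| := le_abs_self R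
      · filter_upwards [hlim i, hDae] with y hy hyD
        have h3 : (LaguerreCell D X g i).indicator (fun y : Euc d => y) y
            = ((LaguerreCell D X g i).indicator (fun _ => (1 : ℝ)) y) • y := by
          by_cases hmem : y ∈ LaguerreCell D X g i
          · rw [Set.indicator_of_mem hmem, Set.indicator_of_mem hmem, one_smul]
          · rw [Set.indicator_of_notMem hmem, Set.indicator_of_notMem hmem, zero_smul]
        rw [h3]
        exact hy.smul_const y
    rwa [integral_indicator (hLmeas i)] at key
  have hminv : Tendsto (fun ε => (mEps ν X g ε i)⁻¹) (𝓝[>] (0 : ℝ))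
      (𝓝 ((cellMass D ν X g i)⁻¹)) := (hmass i).inv₀ (ne_of_gt hm)
  have := hminv.smul hint
  simpa [bEps, cellBary] using this
end
end

section
/- Let D = [0,1]^d and ν a probability measure on D absolutely continuous with respect to Lebesgue measure. Let (ε_N) ⊂ ℝ₊ with ε_N → 0, let h_N = 2^{−N} be dyadic grid sizes, and let (X^N, g^N) be tuples of n pairwise distinct sites and weights converging to (X, g) with X pairwise distinct. Define the piecewise constant functions χ_i^{ε,h}[X,g] that on the interior of each grid cell D_h^α take the constant value χ_i^ε[X,g](y_h^α), where y_h^α is the cell center. Then for each i, χ_i^{ε_N,h_N}[X^N, g^N] converges in L¹(ν) to the indicator function χ_{L_i[X,g]} of the Laguerre cell. -/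
open MeasureTheory Set Filter Topology
open scoped ENNReal NNReal

noncomputable section

/-- The unit cube `[0,1]^d`. -/
def unitCube (d : ℕ) : Set (Euc d) := {y | ∀ j, y j ∈ Icc (0 : ℝ) 1}

/-- Center of the dyadic grid cell of size `h` containing `y` (coordinatewise). -/
def gridCenter {d : ℕ} (h : ℝ) (y : Euc d) : Euc d :=
  WithLp.toLp 2 (fun j => ((⌊y j / h⌋ : ℝ) + 1 / 2) * h)

/-- Spatially discretized entropy-regularized cell function `χ_i^{ε,h}[X,g]`, taking on (the
interior of) each grid cell the value of `χ_i^ε[X,g]` at the cell center. -/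
def chiEpsH {d n : ℕ} (X : Fin n → Euc d) (g : Fin n → ℝ) (ε h : ℝ) (i : Fin n)
    (y : Euc d) : ℝ :=
  chiEps X g ε i (gridCenter h y)

lemma hyperplane_null_s16 {d : ℕ} (a b : Euc d) (hab : a ≠ b) (c₁ c₂ : ℝ) :
    (volume : Measure (Euc d)) {y | ‖y - a‖ ^ 2 - c₁ = ‖y - b‖ ^ 2 - c₂} = 0 := by
  set v : Euc d := b - a with hv
  have hv0 : v ≠ 0 := sub_ne_zero.mpr (Ne.symm hab)
  have hnv : ‖v‖ ^ 2 ≠ 0 := pow_ne_zero _ (norm_ne_zero_iff.mpr hv0)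
  set r : ℝ := (‖b‖ ^ 2 - ‖a‖ ^ 2 + c₁ - c₂) / 2 with hr
  set f : Euc d →ₗ[ℝ] ℝ := ((innerSL ℝ v) : Euc d →L[ℝ] ℝ).toLinearMap with hf
  have hfy : ∀ y, f y = inner ℝ v y := fun y => rfl
  have hset : {y : Euc d | ‖y - a‖ ^ 2 - c₁ = ‖y - b‖ ^ 2 - c₂}
      = {y : Euc d | f y = r} := by
    ext y
    simp only [Set.mem_setOf_eq, hfy]
    have h1 : ‖y - a‖ ^ 2 = ‖y‖ ^ 2 - 2 * inner ℝ y a + ‖a‖ ^ 2 := norm_sub_sq_real y a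
    have h2 : ‖y - b‖ ^ 2 = ‖y‖ ^ 2 - 2 * inner ℝ y b + ‖b‖ ^ 2 := norm_sub_sq_real y b
    have h3 : (inner ℝ v y : ℝ) = inner ℝ y b - inner ℝ y a := by
      rw [real_inner_comm, hv, inner_sub_right]
    rw [h1, h2, h3, hr]
    constructor <;> intro h <;> nlinarith
  rw [hset]
  set p : Euc d := (r / ‖v‖ ^ 2) • v with hp
  have hfp : f p = r := by
    rw [hfy, hp, real_inner_smul_right, real_inner_self_eq_norm_sq, div_mul_cancel₀ _ hnv]
  set s : AffineSubspace ℝ (Euc d) := AffineSubspace.mk' p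
    (LinearMap.ker f : Submodule ℝ (Euc d)) with hs
  have hseq : {y : Euc d | f y = r} = (s : Set (Euc d)) := by
    ext y
    simp only [Set.mem_setOf_eq, hs, SetLike.mem_coe, AffineSubspace.mem_mk',
      LinearMap.mem_ker, vsub_eq_sub, map_sub, hfp]
    constructor <;> intro h <;> linarith
  rw [hseq]
  refine Measure.addHaar_affineSubspace _ s ?_
  intro htop
  have : v ∈ (LinearMap.ker f : Submodule ℝ (Euc d)) := by
    have : v ∈ s.direction := by rw [htop, AffineSubspace.direction_top]; exact Submodule.mem_top
    rwa [hs, AffineSubspace.direction_mk'] at this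
  have := (LinearMap.mem_ker.mp this)
  rw [hfy, real_inner_self_eq_norm_sq] at this
  exact hnv this

lemma gridCenter_tendsto {d : ℕ} (y : Euc d) :
    Tendsto (fun N : ℕ => gridCenter ((2 : ℝ)⁻¹ ^ N) y) atTop (𝓝 y) := by
  have hbound : ∀ N : ℕ, ‖gridCenter ((2 : ℝ)⁻¹ ^ N) y - y‖ ≤ Real.sqrt d * (2 : ℝ)⁻¹ ^ N := by
    intro N
    set h : ℝ := (2 : ℝ)⁻¹ ^ N with hh
    have hpos : 0 < h := pow_pos (by norm_num) N
    have hcoord : ∀ j, |gridCenter h y j - y j| ≤ h := by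
      intro j
      have hfl := Int.floor_le (y j / h)
      have hfl2 := Int.lt_floor_add_one (y j / h)
      have hgc : gridCenter h y j = ((⌊y j / h⌋ : ℝ) + 1 / 2) * h := rfl
      have key : gridCenter h y j - y j = ((⌊y j / h⌋ : ℝ) + 1/2 - y j / h) * h := by
        rw [hgc, sub_mul, div_mul_cancel₀ _ hpos.ne']
      rw [key, abs_mul, abs_of_pos hpos]
      have : |(⌊y j / h⌋ : ℝ) + 1/2 - y j / h| ≤ 1 := by
        rw [abs_le]; constructor <;> linarith
      nlinarith [hpos.le]
    have : ‖gridCenter h y - y‖ ≤ Real.sqrt d * h := by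
      rw [EuclideanSpace.norm_eq]
      have : (∑ j, ‖(gridCenter h y - y) j‖ ^ 2) ≤ d * h ^ 2 := by
        calc (∑ j : Fin d, ‖(gridCenter h y - y) j‖ ^ 2) ≤ ∑ j : Fin d, h ^ 2 := by
              apply Finset.sum_le_sum
              intro j _
              have : (gridCenter h y - y) j = gridCenter h y j - y j := rfl
              rw [this, Real.norm_eq_abs]
              exact pow_le_pow_left₀ (abs_nonneg _) (hcoord j) 2
          _ = d * h ^ 2 := by simp [Finset.sum_const]
      calc Real.sqrt (∑ j, ‖(gridCenter h y - y) j‖ ^ 2) ≤ Real.sqrt (d * h ^ 2) :=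
            Real.sqrt_le_sqrt this
        _ = Real.sqrt d * h := by
            rw [Real.sqrt_mul (Nat.cast_nonneg d), Real.sqrt_sq hpos.le]
    exact this
  have h0 : Tendsto (fun N : ℕ => Real.sqrt d * (2 : ℝ)⁻¹ ^ N) atTop (𝓝 0) := by
    have := tendsto_pow_atTop_nhds_zero_of_lt_one (by norm_num : (0:ℝ) ≤ 2⁻¹) (by norm_num)
    simpa using this.const_mul (Real.sqrt d)
  rw [tendsto_iff_norm_sub_tendsto_zero]
  exact squeeze_zero (fun N => norm_nonneg _) hbound h0

lemma chiEps_eq_inv {d n : ℕ} (X : Fin n → Euc d) (g : Fin n → ℝ) (ε : ℝ) (i : Fin n)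
    (y : Euc d) :
    chiEps X g ε i y =
      (∑ j, Real.exp (((g j - ‖y - X j‖ ^ 2) - (g i - ‖y - X i‖ ^ 2)) / ε))⁻¹ := by
  unfold chiEps
  have hS' : (∑ j, Real.exp (((g j - ‖y - X j‖ ^ 2) - (g i - ‖y - X i‖ ^ 2)) / ε))
      = (∑ j, Real.exp ((g j - ‖y - X j‖ ^ 2) / ε)) /
        Real.exp ((g i - ‖y - X i‖ ^ 2) / ε) := by
    rw [Finset.sum_div]
    refine Finset.sum_congr rfl fun j _ => ?_
    rw [sub_div, Real.exp_sub]
  rw [hS', inv_div]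

lemma chiEps_continuous {d n : ℕ} (X : Fin n → Euc d) (g : Fin n → ℝ) (ε : ℝ) (i : Fin n) :
    Continuous (chiEps X g ε i) := by
  unfold chiEps
  have hterm : ∀ j : Fin n, Continuous fun y : Euc d =>
      Real.exp ((g j - ‖y - X j‖ ^ 2) / ε) := fun j =>
    Real.continuous_exp.comp (((continuous_const.sub
      (((continuous_id.sub continuous_const).norm).pow 2)).div_const ε))
  exact (hterm i).div (continuous_finset_sum _ fun j _ => hterm j)
    (fun y => (Finset.sum_pos (fun j _ => Real.exp_pos _) ⟨i, Finset.mem_univ i⟩).ne')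

lemma gridCenter_measurable {d : ℕ} (h : ℝ) : Measurable (gridCenter (d := d) h) := by
  unfold gridCenter
  refine (WithLp.measurable_toLp 2 (Fin d → ℝ)).comp (measurable_pi_lambda _ fun j => ?_)
  have h1 : Measurable fun y : Euc d => y j := by fun_prop
  have h2 : Measurable fun y : Euc d => (⌊y j / h⌋ : ℤ) :=
    Int.measurable_floor.comp (h1.div_const h)
  exact (((measurable_from_top (f := (Int.cast : ℤ → ℝ))).comp h2).add_const (1/2)).mul_const h

lemma chiEps_mem_Icc {d n : ℕ} (X : Fin n → Euc d) (g : Fin n → ℝ) (ε : ℝ) (i : Fin n)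
    (y : Euc d) : chiEps X g ε i y ∈ Icc (0:ℝ) 1 := by
  have hpos : (0:ℝ) < ∑ j, Real.exp ((g j - ‖y - X j‖ ^ 2) / ε) :=
    Finset.sum_pos (fun j _ => Real.exp_pos _) ⟨i, Finset.mem_univ i⟩
  constructor
  · exact div_nonneg (Real.exp_pos _).le hpos.le
  · show Real.exp _ / _ ≤ 1
    rw [div_le_one hpos]
    exact Finset.single_le_sum (f := fun j => Real.exp ((g j - ‖y - X j‖ ^ 2) / ε))
      (fun j _ => (Real.exp_pos _).le) (Finset.mem_univ i)

lemma laguerre_closed {d n : ℕ} (X : Fin n → Euc d) (g : Fin n → ℝ) (i : Fin n) :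
    IsClosed (LaguerreCell (unitCube d) X g i) := by
  have hD : IsClosed (unitCube d) := by
    have : unitCube d = ⋂ j, (fun y : Euc d => y j) ⁻¹' Icc (0:ℝ) 1 := by
      ext y; simp [unitCube]
    rw [this]
    exact isClosed_iInter fun j => isClosed_Icc.preimage (by fun_prop)
  have : LaguerreCell (unitCube d) X g i = unitCube d ∩
      ⋂ j, {y : Euc d | ‖y - X i‖ ^ 2 - g i ≤ ‖y - X j‖ ^ 2 - g j} := by
    ext y; simp [LaguerreCell]
  rw [this]
  refine hD.inter (isClosed_iInter fun j => ?_)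
  exact isClosed_le (by fun_prop) (by fun_prop)

set_option maxHeartbeats 2000000 in
/-- Proposition on joint convergence of the spatial discretization: if
`ε_N → 0`, `h_N = 2^{−N}`, and `(X^N, g^N) → (X, g)` with pairwise distinct sites, then
`χ_i^{ε_N,h_N}[X^N, g^N] → χ_{L_i[X,g]}` in `L¹(ν)` for every `i`. -/
theorem chiEpsH_L1_convergence
    {d : ℕ} (ν : Measure (Euc d)) [IsProbabilityMeasure ν] (hνD : ν (unitCube d)ᶜ = 0)
    (hac : ν ≪ (volume : Measure (Euc d)))
    {n : ℕ} (hn : 0 < n)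
    (ε : ℕ → ℝ) (hεpos : ∀ N, 0 < ε N) (hε : Tendsto ε atTop (𝓝 0))
    (XN : ℕ → Fin n → Euc d) (gN : ℕ → Fin n → ℝ)
    (hXN : ∀ N, Function.Injective (XN N))
    (X : Fin n → Euc d) (hX : Function.Injective X) (g : Fin n → ℝ)
    (hXconv : ∀ i, Tendsto (fun N => XN N i) atTop (𝓝 (X i)))
    (hgconv : ∀ i, Tendsto (fun N => gN N i) atTop (𝓝 (g i))) :
    ∀ i, Tendsto
      (fun N => ∫ y,
        |chiEpsH (XN N) (gN N) (ε N) ((2 : ℝ)⁻¹ ^ N) i y -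
          (LaguerreCell (unitCube d) X g i).indicator (1 : Euc d → ℝ) y| ∂ν)
      atTop (𝓝 0) := by
  intro i
  set L : Set (Euc d) := LaguerreCell (unitCube d) X g i with hL
  set F : ℕ → Euc d → ℝ := fun N y =>
    |chiEpsH (XN N) (gN N) (ε N) ((2 : ℝ)⁻¹ ^ N) i y - L.indicator (1 : Euc d → ℝ) y|
    with hFdef
  have hLmeas : MeasurableSet L := (laguerre_closed X g i).measurableSet
  have hindmeas : Measurable (L.indicator (1 : Euc d → ℝ)) :=
    measurable_const.indicator hLmeas
  have hFmeas : ∀ N, AEStronglyMeasurable (F N) ν := by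
    intro N
    have h1 : Measurable (chiEpsH (XN N) (gN N) (ε N) ((2 : ℝ)⁻¹ ^ N) i) :=
      (chiEps_continuous (XN N) (gN N) (ε N) i).measurable.comp (gridCenter_measurable _)
    exact ((h1.sub hindmeas).abs).aestronglyMeasurable
  have hind01 : ∀ y, L.indicator (1 : Euc d → ℝ) y = 0 ∨ L.indicator (1 : Euc d → ℝ) y = 1 := by
    intro y; by_cases hy : y ∈ L <;> simp [hy]
  have hbound : ∀ N, ∀ᵐ y ∂ν, ‖F N y‖ ≤ (2 : ℝ) := by
    intro N
    refine Eventually.of_forall fun y => ?_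
    have h2 : chiEpsH (XN N) (gN N) (ε N) ((2 : ℝ)⁻¹ ^ N) i y ∈ Icc (0:ℝ) 1 :=
      chiEps_mem_Icc (XN N) (gN N) (ε N) i (gridCenter ((2 : ℝ)⁻¹ ^ N) y)
    rw [hFdef, Real.norm_eq_abs, abs_abs, abs_le]
    rcases hind01 y with h | h <;> rw [h] <;>
      exact ⟨by linarith [h2.1, h2.2], by linarith [h2.1, h2.2]⟩
  have hae : ∀ᵐ y ∂ν, y ∈ unitCube d ∧
      ∀ j, j ≠ i → ‖y - X i‖ ^ 2 - g i ≠ ‖y - X j‖ ^ 2 - g j := by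
    have h1 : ∀ᵐ y ∂ν, y ∈ unitCube d := by
      rw [ae_iff]; exact hνD
    have h2 : ∀ᵐ y ∂ν, ∀ j, j ≠ i → ‖y - X i‖ ^ 2 - g i ≠ ‖y - X j‖ ^ 2 - g j := by
      rw [ae_all_iff]
      intro j
      by_cases hj : j = i
      · exact Eventually.of_forall fun y h => absurd hj h
      · have hne : X i ≠ X j := hX.ne (Ne.symm hj)
        have h0 : ν {y : Euc d | ‖y - X i‖ ^ 2 - g i = ‖y - X j‖ ^ 2 - g j} = 0 :=
          hac (hyperplane_null_s16 (X i) (X j) hne (g i) (g j))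
        rw [ae_iff]
        refine measure_mono_null ?_ h0
        intro y hy
        simp only [Set.mem_setOf_eq] at hy ⊢
        push_neg at hy
        exact hy.2
    exact h1.and h2
  have hlimae : ∀ᵐ y ∂ν, Tendsto (fun N => F N y) atTop (𝓝 0) := by
    filter_upwards [hae] with y hy
    obtain ⟨hyD, hyne⟩ := hy
    set z : ℕ → Euc d := fun N => gridCenter ((2 : ℝ)⁻¹ ^ N) y with hz
    have hztend : Tendsto z atTop (𝓝 y) := gridCenter_tendsto y
    set A : Fin n → ℝ := fun j => g j - ‖y - X j‖ ^ 2 with hA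
    set G : ℕ → Fin n → ℝ := fun N j => gN N j - ‖z N - XN N j‖ ^ 2 with hG
    have hFtend : ∀ j, Tendsto (fun N => G N j) atTop (𝓝 (A j)) := fun j =>
      (hgconv j).sub (((hztend.sub (hXconv j)).norm).pow 2)
    have hchi : ∀ N, chiEpsH (XN N) (gN N) (ε N) ((2 : ℝ)⁻¹ ^ N) i y
        = (∑ j, Real.exp ((G N j - G N i) / ε N))⁻¹ := fun N =>
      chiEps_eq_inv (XN N) (gN N) (ε N) i (z N)
    have hinv : Tendsto (fun N => (ε N)⁻¹) atTop atTop :=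
      tendsto_inv_nhdsGT_zero.comp
        (tendsto_nhdsWithin_iff.mpr ⟨hε, Eventually.of_forall fun N => hεpos N⟩)
    have key : Tendsto (fun N => chiEpsH (XN N) (gN N) (ε N) ((2 : ℝ)⁻¹ ^ N) i y)
        atTop (𝓝 (L.indicator (1 : Euc d → ℝ) y)) := by
      by_cases hin : ∀ j, j ≠ i → A j < A i
      · have hyL : y ∈ L := by
          refine ⟨hyD, fun j => ?_⟩
          by_cases hj : j = i
          · subst hj; exact le_refl _
          · have := hin j hj
            simp only [hA] at this
            linarith
        rw [hL] at hyL
        have hind : L.indicator (1 : Euc d → ℝ) y = 1 := by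
          rw [Set.indicator_of_mem hyL, Pi.one_apply]
        rw [hind]
        have hterm : ∀ j : Fin n, Tendsto (fun N => Real.exp ((G N j - G N i) / ε N))
            atTop (𝓝 (if j = i then (1:ℝ) else 0)) := by
          intro j
          by_cases hj : j = i
          · subst hj
            rw [if_pos rfl]
            have : (fun N => Real.exp ((G N j - G N j) / ε N)) = fun _ => (1:ℝ) := by
              funext N; rw [sub_self, zero_div, Real.exp_zero]
            rw [this]
            exact tendsto_const_nhds
          · rw [if_neg hj]
            have hdiff : Tendsto (fun N => G N j - G N i) atTop (𝓝 (A j - A i)) :=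
              (hFtend j).sub (hFtend i)
            have hneg : A j - A i < 0 := sub_neg.mpr (hin j hj)
            have hbot : Tendsto (fun N => (G N j - G N i) / ε N) atTop atBot := by
              simp only [div_eq_mul_inv]
              exact hdiff.neg_mul_atTop hneg hinv
            exact Real.tendsto_exp_atBot.comp hbot
        have hsum : Tendsto (fun N => ∑ j, Real.exp ((G N j - G N i) / ε N)) atTop
            (𝓝 (∑ j, if j = i then (1:ℝ) else 0)) :=
          tendsto_finset_sum _ fun j _ => hterm j
        have hsum1 : (∑ j, if j = i then (1:ℝ) else 0) = 1 := by simp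
        rw [hsum1] at hsum
        have hres := hsum.inv₀ one_ne_zero
        rw [inv_one] at hres
        exact hres.congr fun N => (hchi N).symm
      · push_neg at hin
        obtain ⟨j₀, hj₀, hge⟩ := hin
        have hAne : A i ≠ A j₀ := by
          intro h
          refine hyne j₀ hj₀ ?_
          simp only [hA] at h
          linarith
        have hlt : A i < A j₀ := lt_of_le_of_ne hge hAne
        have hyL : y ∉ L := by
          intro hyL
          have := hyL.2 j₀
          simp only [hA] at hlt
          linarith
        have hind : L.indicator (1 : Euc d → ℝ) y = 0 := Set.indicator_of_notMem hyL _
        rw [hind]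
        have hdiff : Tendsto (fun N => G N j₀ - G N i) atTop (𝓝 (A j₀ - A i)) :=
          (hFtend j₀).sub (hFtend i)
        have hpos : (0:ℝ) < A j₀ - A i := sub_pos.mpr hlt
        have htop : Tendsto (fun N => (G N j₀ - G N i) / ε N) atTop atTop := by
          simp only [div_eq_mul_inv]
          exact hdiff.pos_mul_atTop hpos hinv
        have hexp : Tendsto (fun N => Real.exp ((G N j₀ - G N i) / ε N)) atTop atTop :=
          Real.tendsto_exp_atTop.comp htop
        have hsumtop : Tendsto (fun N => ∑ j, Real.exp ((G N j - G N i) / ε N)) atTop atTop :=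
          tendsto_atTop_mono (fun N => Finset.single_le_sum
            (f := fun j => Real.exp ((G N j - G N i) / ε N))
            (fun j _ => (Real.exp_pos _).le) (Finset.mem_univ j₀)) hexp
        have hres := hsumtop.inv_tendsto_atTop
        exact hres.congr fun N => (hchi N).symm
    have : Tendsto (fun N => F N y) atTop
        (𝓝 |L.indicator (1 : Euc d → ℝ) y - L.indicator (1 : Euc d → ℝ) y|) :=
      (key.sub_const _).abs
    simpa using this
  have hmain := tendsto_integral_of_dominated_convergence (fun _ : Euc d => (2:ℝ))
    hFmeas (integrable_const 2) hbound
    (by filter_upwards [hlimae] with y hy using hy)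
  rw [MeasureTheory.integral_zero] at hmain
  exact hmain
end
end
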